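/- Let F_e be a set of at most 4 edges of the 3-dimensional bubble-sort star graph BS_3. If BS_3 − F_e is disconnected, then BS_3 − F_e has exactly two connected components, one of which is an isolated vertex or a single edge. -/

import Mathlib

open SimpleGraph

/-- Adjacency relation of the bubble-sort star graph: `y` is obtained from `x` by
swapping the symbols at positions `i` and `j` (0-indexed), where either `j = i+1`
(an adjacent transposition, i.e. positions `k-1, k` for `k ∈ [2,n]`) or `i = 0`
(a star transposition, i.e. positions `1, k` for `k ∈ [2,n]`). -/
def BSRel (n : ℕ) (x y : Equiv.Perm (Fin n)) : Prop :=
  ∃ i j : Fin n, (j.val = i.val + 1 ∨ i.val = 0) ∧ i ≠ j ∧ y = x * Equiv.swap i j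

/-- The n-dimensional bubble-sort star graph `BS_n` on the permutations of `{1,…,n}`. -/
def BS (n : ℕ) : SimpleGraph (Equiv.Perm (Fin n)) :=
  SimpleGraph.fromRel (BSRel n)

/-- The degree of a vertex, as the cardinality of its neighbour set. -/
noncomputable def deg {V : Type*} (G : SimpleGraph V) (v : V) : ℕ :=
  (G.neighborSet v).ncard

/-- `G` contains `m` pairwise edge-disjoint paths joining `u` and `v`. -/
def HasEdgeDisjointPaths {V : Type*} (G : SimpleGraph V) (u v : V) (m : ℕ) : Prop :=
  ∃ P : Fin m → G.Path u v, ∀ i j : Fin m, i ≠ j →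
    List.Disjoint ((P i : G.Walk u v).edges) ((P j : G.Walk u v).edges)

/-! ### Auxiliary machinery -/

section FastReach
variable {V : Type*} [Fintype V] [DecidableEq V] (G : SimpleGraph V) [DecidableRel G.Adj]

def nstep (S : Finset V) : Finset V := S ∪ S.biUnion (fun w => G.neighborFinset w)

lemma nstep_mono : Monotone (nstep G) := fun _ _ h =>
  Finset.union_subset_union h (Finset.biUnion_subset_biUnion_of_subset_left _ h)

lemma subset_nstep (S : Finset V) : S ⊆ nstep G S := Finset.subset_union_left

lemma iterate_nstep_mono_n (S : Finset V) : Monotone (fun n => (nstep G)^[n] S) :=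
  Monotone.monotone_iterate_of_le_map (nstep_mono G) (subset_nstep G S)

lemma walk_mem_iterate {u v : V} (p : G.Walk u v) : v ∈ (nstep G)^[p.length] {u} := by
  induction p with
  | nil => simp
  | @cons a b c h q ih =>
    rw [SimpleGraph.Walk.length_cons, Function.iterate_succ_apply]
    refine Finset.mem_of_subset ((nstep_mono G).iterate q.length (?_ : ({b} : Finset V) ⊆ nstep G {a})) ih
    intro x hx
    rw [Finset.mem_singleton] at hx
    subst hx
    exact Finset.mem_union_right _ (Finset.mem_biUnion.2 ⟨a, Finset.mem_singleton_self a,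
      (G.mem_neighborFinset a x).2 h⟩)

lemma mem_iterate_reachable {u : V} :
    ∀ (n : ℕ) (v : V), v ∈ (nstep G)^[n] {u} → G.Reachable u v := by
  intro n
  induction n with
  | zero =>
    intro v hv
    rw [Function.iterate_zero_apply, Finset.mem_singleton] at hv
    subst hv; rfl
  | succ n ih =>
    intro v hv
    rw [Function.iterate_succ_apply', nstep, Finset.mem_union] at hv
    rcases hv with hv | hv
    · exact ih v hv
    · obtain ⟨w, hw, hvw⟩ := Finset.mem_biUnion.1 hv
      exact (ih w hw).trans ((G.mem_neighborFinset w v).1 hvw).reachable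

def reachFinset (u : V) : Finset V := (nstep G)^[Fintype.card V] {u}

lemma mem_reachFinset {u v : V} : v ∈ reachFinset G u ↔ G.Reachable u v := by
  constructor
  · exact mem_iterate_reachable G _ v
  · intro r
    refine r.elim_path fun q => ?_
    have h1 := walk_mem_iterate G (q : G.Walk u v)
    exact iterate_nstep_mono_n G {u} (le_of_lt q.isPath.length_lt) h1

lemma reachFinset_eq_iff {u v : V} : reachFinset G u = reachFinset G v ↔ G.Reachable u v := by
  constructor
  · intro h
    have hv : v ∈ reachFinset G v := (mem_reachFinset G).2 (SimpleGraph.Reachable.refl v)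
    rw [← h, mem_reachFinset G] at hv
    exact hv
  · intro r
    ext w
    rw [mem_reachFinset G, mem_reachFinset G]
    exact ⟨fun h => (r.symm).trans h, fun h => r.trans h⟩

lemma card_connectedComponent_eq_card_image [Fintype G.ConnectedComponent] :
    Fintype.card G.ConnectedComponent
      = (Finset.univ.image (fun v => reachFinset G v)).card := by
  classical
  let f : G.ConnectedComponent → Finset V := fun C =>
    C.lift (fun v => reachFinset G v)
      (fun u v p _ => (reachFinset_eq_iff G).2 p.reachable)
  have hf : ∀ v : V, f (G.connectedComponentMk v) = reachFinset G v := fun v => rfl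
  have hinj : Function.Injective f := by
    intro C D h
    induction C using SimpleGraph.ConnectedComponent.ind with | _ u => ?_
    induction D using SimpleGraph.ConnectedComponent.ind with | _ v => ?_
    rw [hf, hf] at h
    exact SimpleGraph.ConnectedComponent.sound ((reachFinset_eq_iff G).1 h)
  have himg : (Finset.univ.image (fun v => reachFinset G v)) = Finset.univ.image f := by
    apply Finset.Subset.antisymm
    · intro S hS
      obtain ⟨v, _, rfl⟩ := Finset.mem_image.1 hS
      exact Finset.mem_image.2 ⟨G.connectedComponentMk v, Finset.mem_univ _, rfl⟩
    · intro S hS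
      obtain ⟨C, _, rfl⟩ := Finset.mem_image.1 hS
      induction C using SimpleGraph.ConnectedComponent.ind with | _ v => ?_
      exact Finset.mem_image.2 ⟨v, Finset.mem_univ _, rfl⟩
  rw [himg, Finset.card_image_of_injective _ hinj, Finset.card_univ]

lemma supp_eq_reach (v : V) :
    (G.connectedComponentMk v).supp = ↑(reachFinset G v) := by
  ext w
  rw [Finset.mem_coe, mem_reachFinset G, SimpleGraph.ConnectedComponent.mem_supp_iff,
    SimpleGraph.ConnectedComponent.eq]
  exact ⟨fun h => h.symm, fun h => h.symm⟩

end FastReach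

/-! ### Bitmask computation on `Fin 6` -/

def mstep (nbr : Nat → Nat) (m : Nat) : Nat :=
  (m ||| (cond (m.testBit 0) (nbr 0) 0) ||| (cond (m.testBit 1) (nbr 1) 0) |||
    (cond (m.testBit 2) (nbr 2) 0) ||| (cond (m.testBit 3) (nbr 3) 0) |||
    (cond (m.testBit 4) (nbr 4) 0) ||| (cond (m.testBit 5) (nbr 5) 0)) &&& 63

def mclosure (nbr : Nat → Nat) (u : Nat) : Nat := (mstep nbr)^[6] (2 ^ u)

def nbrB (b : Fin 9 → Bool) (i : Nat) : Nat :=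
  (cond (b 0) 0 (if i = 0 then 2^1 else if i = 1 then 2^0 else 0)) |||
    (cond (b 1) 0 (if i = 0 then 2^2 else if i = 2 then 2^0 else 0)) |||
    (cond (b 2) 0 (if i = 0 then 2^3 else if i = 3 then 2^0 else 0)) |||
    (cond (b 3) 0 (if i = 4 then 2^1 else if i = 1 then 2^4 else 0)) |||
    (cond (b 4) 0 (if i = 4 then 2^2 else if i = 2 then 2^4 else 0)) |||
    (cond (b 5) 0 (if i = 4 then 2^3 else if i = 3 then 2^4 else 0)) |||
    (cond (b 6) 0 (if i = 5 then 2^1 else if i = 1 then 2^5 else 0)) |||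
    (cond (b 7) 0 (if i = 5 then 2^2 else if i = 2 then 2^5 else 0)) |||
    (cond (b 8) 0 (if i = 5 then 2^3 else if i = 3 then 2^5 else 0))

def maskFinset (m : Nat) : Finset (Fin 6) :=
  (Finset.univ : Finset (Fin 6)).filter (fun w => m.testBit w.val)

def pc6 (m : Nat) : Nat := (maskFinset m).card

lemma tbcond (b : Bool) (x y : Nat) (i : Nat) :
    (cond b x y).testBit i = cond b (x.testBit i) (y.testBit i) := by cases b <;> rfl

set_option maxHeartbeats 1600000 in
lemma mstep_testBit (nbr : Nat → Nat) (m : Nat) (w : Fin 6) :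
    (mstep nbr m).testBit w.val = true ↔
      (m.testBit w.val = true ∨
        ∃ v : Fin 6, m.testBit v.val = true ∧ (nbr v.val).testBit w.val = true) := by
  have h63 : Nat.testBit 63 w.val = true := by fin_cases w <;> rfl
  have hex : ∀ P : Fin 6 → Prop,
      (∃ v : Fin 6, P v) ↔ P 0 ∨ P 1 ∨ P 2 ∨ P 3 ∨ P 4 ∨ P 5 := by
    intro P
    constructor
    · rintro ⟨v, hv⟩; fin_cases v <;> tauto
    · rintro (h|h|h|h|h|h) <;> exact ⟨_, h⟩
  rw [hex]
  simp [mstep, Nat.testBit_and, Nat.testBit_or, tbcond, h63]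
  tauto

lemma corr (G : SimpleGraph (Fin 6)) [DecidableRel G.Adj] (nbr : Nat → Nat)
    (h : ∀ v w : Fin 6, (nbr v.val).testBit w.val = true ↔ G.Adj v w) :
    ∀ (k : ℕ) (u w : Fin 6),
      ((mstep nbr)^[k] (2 ^ u.val)).testBit w.val = true ↔ w ∈ (nstep G)^[k] {u} := by
  intro k
  induction k with
  | zero =>
    intro u w
    simp only [Function.iterate_zero_apply, Finset.mem_singleton, Nat.testBit_two_pow,
      decide_eq_true_eq]
    rw [Fin.val_inj]
    exact eq_comm
  | succ k ih =>
    intro u w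
    rw [Function.iterate_succ_apply', Function.iterate_succ_apply', mstep_testBit]
    simp only [nstep, Finset.mem_union, Finset.mem_biUnion, SimpleGraph.mem_neighborFinset]
    constructor
    · rintro (hw | ⟨v, hv, hnb⟩)
      · exact Or.inl ((ih u w).1 hw)
      · exact Or.inr ⟨v, (ih u v).1 hv, (h v w).1 hnb⟩
    · rintro (hw | ⟨v, hv, hadj⟩)
      · exact Or.inl ((ih u w).2 hw)
      · exact Or.inr ⟨v, (ih u v).2 hv, (h v w).2 hadj⟩

lemma corr6 (G : SimpleGraph (Fin 6)) [DecidableRel G.Adj] (nbr : Nat → Nat)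
    (h : ∀ v w : Fin 6, (nbr v.val).testBit w.val = true ↔ G.Adj v w) (u w : Fin 6) :
    (mclosure nbr u.val).testBit w.val = true ↔ w ∈ reachFinset G u := by
  rw [reachFinset, Fintype.card_fin]
  exact corr G nbr h 6 u w

lemma mclosure_high (nbr : Nat → Nat) (u : Nat) :
    ∀ i, 6 ≤ i → (mclosure nbr u).testBit i = false := by
  intro i hi
  have h63 : Nat.testBit 63 i = false := by
    apply Nat.testBit_lt_two_pow
    calc (63 : ℕ) < 2 ^ 6 := by norm_num
    _ ≤ 2 ^ i := Nat.pow_le_pow_right (by norm_num) hi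
  rw [mclosure, show (6 : ℕ) = 5 + 1 from rfl, Function.iterate_succ_apply', mstep,
    Nat.testBit_and, h63, Bool.and_false]

lemma mask_eq_of {m m' : Nat} (hm : ∀ i, 6 ≤ i → m.testBit i = false)
    (hm' : ∀ i, 6 ≤ i → m'.testBit i = false)
    (hlow : ∀ w : Fin 6, m.testBit w.val = m'.testBit w.val) : m = m' := by
  apply Nat.eq_of_testBit_eq
  intro i
  by_cases h6 : i < 6
  · exact hlow ⟨i, h6⟩
  · rw [hm i (le_of_not_gt h6), hm' i (le_of_not_gt h6)]

lemma reachFinset_eq_maskFinset (G : SimpleGraph (Fin 6)) [DecidableRel G.Adj]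
    (nbr : Nat → Nat) (h : ∀ v w : Fin 6, (nbr v.val).testBit w.val = true ↔ G.Adj v w)
    (u : Fin 6) : reachFinset G u = maskFinset (mclosure nbr u.val) := by
  ext w
  rw [maskFinset, Finset.mem_filter]
  constructor
  · intro hw
    exact ⟨Finset.mem_univ _, (corr6 G nbr h u w).2 hw⟩
  · intro hw
    exact (corr6 G nbr h u w).1 hw.2

/-! ### The concrete graph `G6` -/

def odd6 : Fin 6 → Bool := fun x => decide (x.val = 1 ∨ x.val = 2 ∨ x.val = 3)

def G6 : SimpleGraph (Fin 6) where
  Adj x y := odd6 x ≠ odd6 y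
  symm := ⟨fun _ _ h => Ne.symm h⟩
  loopless := ⟨fun _ h => h rfl⟩

instance : DecidableRel G6.Adj := fun _ _ => instDecidableNot

instance instDelDec (t : Finset (Sym2 (Fin 6))) :
    DecidableRel (G6.deleteEdges (↑t : Set (Sym2 (Fin 6)))).Adj :=
  fun x y => decidable_of_iff (G6.Adj x y ∧ ¬ s(x,y) ∈ t)
    (by rw [SimpleGraph.deleteEdges_adj, Finset.mem_coe])

def eFn : Fin 9 → Sym2 (Fin 6)
  | 0 => s(0,1) | 1 => s(0,2) | 2 => s(0,3)
  | 3 => s(4,1) | 4 => s(4,2) | 5 => s(4,3)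
  | 6 => s(5,1) | 7 => s(5,2) | 8 => s(5,3)

lemma eFn_inj : Function.Injective eFn := by decide

set_option maxHeartbeats 1000000 in
lemma eFn_cover : ∀ z ∈ G6.edgeFinset, ∃ k, eFn k = z := by decide

set_option maxHeartbeats 4000000 in
lemma bridge (t : Finset (Sym2 (Fin 6))) (v w : Fin 6) :
    (nbrB (fun k => decide (eFn k ∈ t)) v.val).testBit w.val = true ↔
    (G6.deleteEdges (↑t : Set (Sym2 (Fin 6)))).Adj v w := by
  rw [SimpleGraph.deleteEdges_adj]
  rw [show (s(v,w) ∈ (↑t : Set (Sym2 (Fin 6)))) = (s(v,w) ∈ t) from propext Finset.mem_coe]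
  fin_cases v <;> fin_cases w <;>
    (simp only [nbrB, Nat.testBit_or, tbcond];
     simp +decide [eFn, G6, odd6, Nat.testBit_two_pow, Nat.zero_testBit, Sym2.eq_swap];
     try rw [show s((0:Fin 6),(1:Fin 6)) = s((1:Fin 6),(0:Fin 6)) from Sym2.eq_swap])
  all_goals exact decide_eq_false_iff_not.trans (by rw [Sym2.eq_swap])

set_option maxRecDepth 100000 in
set_option maxHeartbeats 8000000 in
lemma L1 : ∀ b : Fin 9 → Bool, ((Finset.univ.filter (fun k => b k = true)).card ≤ 4) →
    mclosure (nbrB b) 0 ≠ 63 →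
    ((Finset.univ.image (fun v : Fin 6 => mclosure (nbrB b) v.val)).card = 2 ∧
     ∃ v : Fin 6, pc6 (mclosure (nbrB b) v.val) = 1 ∨ pc6 (mclosure (nbrB b) v.val) = 2) := by
  decide

/-! ### The isomorphism between `BS 3` and `G6` -/

instance (n : ℕ) (x y : Equiv.Perm (Fin n)) : Decidable (BSRel n x y) := by
  unfold BSRel; infer_instance

instance (n : ℕ) : DecidableRel (BS n).Adj := fun x y =>
  decidable_of_iff (x ≠ y ∧ (BSRel n x y ∨ BSRel n y x)) (SimpleGraph.fromRel_adj _ _ _).symm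

def p0 : Equiv.Perm (Fin 3) := 1
def p1 : Equiv.Perm (Fin 3) := Equiv.swap 0 1
def p2 : Equiv.Perm (Fin 3) := Equiv.swap 0 2
def p3 : Equiv.Perm (Fin 3) := Equiv.swap 1 2
def p4 : Equiv.Perm (Fin 3) := Equiv.swap 0 1 * Equiv.swap 1 2
def p5 : Equiv.Perm (Fin 3) := Equiv.swap 1 2 * Equiv.swap 0 1

def eP : Equiv.Perm (Fin 3) ≃ Fin 6 where
  toFun p := if p = p0 then 0 else if p = p1 then 1 else if p = p2 then 2 else
    if p = p3 then 3 else if p = p4 then 4 else 5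
  invFun i := match i with
    | 0 => p0 | 1 => p1 | 2 => p2 | 3 => p3 | 4 => p4 | 5 => p5
  left_inv := by decide
  right_inv := by decide

lemma hAdjIso : ∀ a b : Equiv.Perm (Fin 3), G6.Adj (eP a) (eP b) ↔ (BS 3).Adj a b := by decide

def isoBS : BS 3 ≃g G6 := ⟨eP, fun {a b} => hAdjIso a b⟩

/-- If at most `4` edges are deleted from `BS_3` and the result is disconnected, then it has
exactly two connected components, one of which is an isolated vertex or a single edge. -/
theorem BS3_deleteEdges_components (F : Set (Sym2 (Equiv.Perm (Fin 3))))
    (hF : F ⊆ (BS 3).edgeSet) (hcard : F.ncard ≤ 4)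
    (hdisc : ¬ ((BS 3).deleteEdges F).Connected) :
    Nat.card ((BS 3).deleteEdges F).ConnectedComponent = 2 ∧
    ∃ C : ((BS 3).deleteEdges F).ConnectedComponent,
      C.supp.ncard = 1 ∨ C.supp.ncard = 2 := by
  classical
  -- move the deleted edge set to the `Fin 6` side
  have hFfin : F.Finite := Set.toFinite F
  have hfin : (Sym2.map eP '' F).Finite := hFfin.image _
  set t : Finset (Sym2 (Fin 6)) := hfin.toFinset with ht
  have hts : (↑t : Set (Sym2 (Fin 6))) = Sym2.map eP '' F := hfin.coe_toFinset
  -- the graphs are isomorphic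
  have hmemF : ∀ a b : Equiv.Perm (Fin 3), (s(eP a, eP b) ∈ (↑t : Set (Sym2 (Fin 6)))) ↔ s(a,b) ∈ F := by
    intro a b
    rw [hts, ← Sym2.map_pair_eq]
    exact ⟨fun h => by
      obtain ⟨z, hz, hze⟩ := h
      rwa [← Sym2.map.injective eP.injective hze],
      fun h => ⟨_, h, rfl⟩⟩
  have hadj2 : ∀ a b : Equiv.Perm (Fin 3),
      (G6.deleteEdges (↑t : Set (Sym2 (Fin 6)))).Adj (eP a) (eP b) ↔
      ((BS 3).deleteEdges F).Adj a b := by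
    intro a b
    rw [SimpleGraph.deleteEdges_adj, SimpleGraph.deleteEdges_adj, hmemF a b, hAdjIso a b]
  let iso2 : (BS 3).deleteEdges F ≃g G6.deleteEdges (↑t : Set (Sym2 (Fin 6))) :=
    ⟨eP, fun {a b} => hadj2 a b⟩
  -- the deleted edges on the `Fin 6` side are edges of `G6`
  have htE : t ⊆ G6.edgeFinset := by
    intro z hz
    rw [← Finset.mem_coe, hts] at hz
    obtain ⟨z', hz', rfl⟩ := hz
    have hz'' := hF hz'
    induction z' with
    | _ a b =>
      rw [SimpleGraph.mem_edgeSet] at hz''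
      rw [Sym2.map_pair_eq, SimpleGraph.mem_edgeFinset, SimpleGraph.mem_edgeSet]
      exact (hAdjIso a b).2 hz''
  -- cardinality bound
  have htcard : t.card ≤ 4 := by
    have h1 : t.card = (Sym2.map eP '' F).ncard := by
      rw [Set.ncard_eq_toFinset_card _ hfin]
    rw [h1]
    exact le_trans (Set.ncard_image_le hFfin) hcard
  -- set up the bitmask data
  set b : Fin 9 → Bool := fun k => decide (eFn k ∈ t) with hb
  have hbr : ∀ v w : Fin 6, (nbrB b v.val).testBit w.val = true ↔
      (G6.deleteEdges (↑t : Set (Sym2 (Fin 6)))).Adj v w := fun v w => bridge t v w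
  -- the count of deleted edges matches
  have hcount : (Finset.univ.filter (fun k => b k = true)).card = t.card := by
    apply Finset.card_bij (fun k _ => eFn k)
    · intro k hk
      rw [Finset.mem_filter, hb] at hk
      exact of_decide_eq_true hk.2
    · intro k1 _ k2 _ h
      exact eFn_inj h
    · intro z hz
      obtain ⟨k, hk⟩ := eFn_cover z (htE hz)
      refine ⟨k, ?_, hk⟩
      rw [Finset.mem_filter, hb]
      exact ⟨Finset.mem_univ _, decide_eq_true (hk ▸ hz)⟩
  -- the `Fin 6` graph is disconnected
  have hdisc6 : ¬ (G6.deleteEdges (↑t : Set (Sym2 (Fin 6)))).Connected := by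
    intro hc
    exact hdisc (iso2.connected_iff.2 hc)
  -- hence the closure of `0` is not everything
  have hne : mclosure (nbrB b) 0 ≠ 63 := by
    intro h63
    apply hdisc6
    rw [SimpleGraph.connected_iff_exists_forall_reachable]
    refine ⟨0, fun w => ?_⟩
    rw [← mem_reachFinset (G6.deleteEdges (↑t : Set (Sym2 (Fin 6))))]
    have : (mclosure (nbrB b) (0 : Fin 6).val).testBit w.val = true := by
      rw [show ((0 : Fin 6)).val = 0 from rfl, h63]
      fin_cases w <;> rfl
    exact (corr6 _ (nbrB b) hbr 0 w).1 this
  -- apply the decided main lemma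
  obtain ⟨hcard2, v, hv⟩ := L1 b (hcount ▸ htcard) hne
  constructor
  · -- number of connected components
    have hG6 : Fintype.card (G6.deleteEdges (↑t : Set (Sym2 (Fin 6)))).ConnectedComponent = 2 := by
      rw [card_connectedComponent_eq_card_image]
      have himg : (Finset.univ.image
            (fun v => reachFinset (G6.deleteEdges (↑t : Set (Sym2 (Fin 6)))) v))
          = (Finset.univ.image (fun v : Fin 6 => mclosure (nbrB b) v.val)).image maskFinset := by
        rw [Finset.image_image]
        apply Finset.image_congr
        intro x _
        exact reachFinset_eq_maskFinset _ (nbrB b) hbr x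
      rw [himg, Finset.card_image_of_injOn, hcard2]
      intro m1 hm1 m2 hm2 h
      rw [Finset.coe_image, Set.mem_image] at hm1 hm2
      obtain ⟨u1, _, rfl⟩ := hm1
      obtain ⟨u2, _, rfl⟩ := hm2
      apply mask_eq_of (mclosure_high _ _) (mclosure_high _ _)
      intro w
      have := Finset.ext_iff.1 h w
      rw [maskFinset, maskFinset, Finset.mem_filter, Finset.mem_filter] at this
      simp only [Finset.mem_univ, true_and] at this
      rcases Bool.eq_false_or_eq_true ((mclosure (nbrB b) u1.val).testBit w.val) with h1 | h1 <;>
        rcases Bool.eq_false_or_eq_true ((mclosure (nbrB b) u2.val).testBit w.val) with h2 | h2 <;>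
        (try rw [h1, h2]) <;> simp [h1, h2] at this ⊢
    calc Nat.card ((BS 3).deleteEdges F).ConnectedComponent
        = Nat.card (G6.deleteEdges (↑t : Set (Sym2 (Fin 6)))).ConnectedComponent :=
          Nat.card_congr iso2.connectedComponentEquiv
      _ = 2 := by rw [Nat.card_eq_fintype_card, hG6]
  · -- a small component
    set G' := G6.deleteEdges (↑t : Set (Sym2 (Fin 6))) with hG'
    have hsupp : (G'.connectedComponentMk v).supp.ncard = pc6 (mclosure (nbrB b) v.val) := by
      rw [supp_eq_reach, Set.ncard_coe_finset, reachFinset_eq_maskFinset _ (nbrB b) hbr, pc6]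
    refine ⟨iso2.connectedComponentEquiv.symm (G'.connectedComponentMk v), ?_⟩
    have hequiv : (iso2.connectedComponentEquiv.symm (G'.connectedComponentMk v)).supp.ncard
        = (G'.connectedComponentMk v).supp.ncard := by
      rw [← Nat.card_coe_set_eq, ← Nat.card_coe_set_eq]
      apply Nat.card_congr
      have := SimpleGraph.ConnectedComponent.isoEquivSupp iso2
        (iso2.connectedComponentEquiv.symm (G'.connectedComponentMk v))
      rwa [Equiv.apply_symm_apply] at this
    rw [hequiv, hsupp]
    exact hv
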